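/- Let δ ≥ 0. If R ⊆ G_d is a δ-nonrecurrent subset of the finite group G_d and α ∈ 𝕋^d, then for all sufficiently small ε > 0, the set S := {n ∈ ℤ : nα ∈ R + V_ε} is a δ-nonrecurrent subset of ℤ. -/

import Mathlib

open Pointwise

/-- The upper asymptotic density of a set of integers:
`limsup_{N→∞} |A ∩ {1,…,N}| / N`. -/
noncomputable def upperDensity (A : Set ℤ) : ℝ :=
  Filter.limsup (fun N : ℕ => ((A ∩ Set.Icc (1 : ℤ) (N : ℤ)).ncard : ℝ) / N) Filter.atTop

/-- `S ⊆ ℤ` is `δ`-nonrecurrent: there is `A ⊆ ℤ` with `d̄(A) > δ` and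
`(A - A) ∩ S = ∅`. -/
def IntNonrecurrent (δ : ℝ) (S : Set ℤ) : Prop :=
  ∃ A : Set ℤ, δ < upperDensity A ∧ ∀ a ∈ A, ∀ b ∈ A, a - b ∉ S

/-- The finite subgroup `G_d = {0, 1/2}^d ⊆ 𝕋^d`. -/
def Gd (d : ℕ) : Set (Fin d → UnitAddCircle) :=
  {x | ∀ j, x j = 0 ∨ x j = ((1 / 2 : ℝ) : UnitAddCircle)}

/-- The open box `V_ε = {x ∈ 𝕋^d : max_j ‖x_j‖ < ε}`. -/
def Veps (d : ℕ) (ε : ℝ) : Set (Fin d → UnitAddCircle) :=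
  {x | ∀ j, ‖x j‖ < ε}

/-! ### Auxiliary material -/

namespace LiftNonrec

open Filter Finset

noncomputable def half : UnitAddCircle := ((1 / 2 : ℝ) : UnitAddCircle)

lemma norm_half : ‖half‖ = 1/2 := by
  rw [half, UnitAddCircle.norm_eq]
  norm_num [round_eq]

lemma half_ne_zero : half ≠ 0 := by
  intro h
  have := norm_half
  rw [h, norm_zero] at this
  norm_num at this

lemma half_add_half : half + half = 0 := by
  rw [half, ← AddCircle.coe_add]
  norm_num

lemma neg_half : -half = half := by
  rw [neg_eq_iff_add_eq_zero, half_add_half]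

lemma norm_coe_le (y : ℝ) : ‖(y : UnitAddCircle)‖ ≤ |y| := by
  rw [UnitAddCircle.norm_eq]; simpa using round_le y 0

lemma sub_mem_half (p q : UnitAddCircle) (hp : p = 0 ∨ p = half) (hq : q = 0 ∨ q = half) :
    p - q = 0 ∨ p - q = half := by
  rcases hp with hp | hp <;> rcases hq with hq | hq <;> subst hp <;> subst hq <;>
    simp [sub_eq_add_neg, neg_half, half_add_half]

lemma int_coe_zero (m : ℤ) : ((m : ℝ) : UnitAddCircle) = 0 := by
  simp [AddCircle.coe_eq_zero_iff]

lemma coe_eq_coe_of_int (a b : ℝ) (m : ℤ) (h : a - b = m) :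
    ((a : ℝ) : UnitAddCircle) = ((b : ℝ) : UnitAddCircle) := by
  have h2 : ((a - b : ℝ) : UnitAddCircle) = 0 := by rw [h]; exact int_coe_zero m
  rw [AddCircle.coe_sub] at h2
  exact sub_eq_zero.mp h2

lemma mem_Gd_iff {d : ℕ} (x : Fin d → UnitAddCircle) :
    x ∈ Gd d ↔ ∀ j, x j = 0 ∨ x j = half := Iff.rfl

/-- The parametrization of `G_d` by boolean vectors. -/
noncomputable def boolToG (d : ℕ) : (Fin d → Bool) → (Fin d → UnitAddCircle) :=
  fun b j => if b j then half else 0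

lemma range_boolToG (d : ℕ) : Set.range (boolToG d) = Gd d := by
  ext x
  constructor
  · rintro ⟨b, rfl⟩ j
    by_cases h : b j
    · exact Or.inr (by simp [boolToG, h, half])
    · exact Or.inl (by simp [boolToG, h])
  · intro hx
    classical
    refine ⟨fun j => decide (x j = half), funext fun j => ?_⟩
    rcases (mem_Gd_iff x).mp hx j with h | h
    · have hne : x j ≠ half := by rw [h]; exact fun he => half_ne_zero he.symm
      have hd : (decide (x j = half)) = false := decide_eq_false hne
      calc boolToG d (fun j => decide (x j = half)) j
          = if decide (x j = half) then half else 0 := rfl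
        _ = x j := by rw [hd]; simp [h]
    · simp [boolToG, h]

lemma boolToG_injective (d : ℕ) : Function.Injective (boolToG d) := by
  intro b b' h
  funext j
  have hj := congrFun h j
  by_cases hb : b j <;> by_cases hb' : b' j <;>
    simp only [boolToG, hb, hb', if_true, if_false] at hj ⊢
  · exact absurd hj half_ne_zero
  · exact absurd hj.symm half_ne_zero

lemma Gd_finite (d : ℕ) : (Gd d).Finite := by
  rw [← range_boolToG]; exact Set.finite_range _

lemma ncard_Gd (d : ℕ) : (Gd d).ncard = 2 ^ d := by
  rw [← range_boolToG, ← Set.image_univ, Set.ncard_image_of_injective _ (boolToG_injective d),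
    Set.ncard_univ]
  simp [Nat.card_eq_fintype_card]

open scoped Classical in
lemma arc_count (M : ℕ) (hM : 0 < M) (ρ : ℝ) (hρ : ρ ≤ 1/4)
    (x : UnitAddCircle) :
    2*ρ*M - 1 ≤ ((Finset.univ.filter
      (fun i : Fin M => ‖x - ((((i : ℕ) : ℝ)/M : ℝ) : UnitAddCircle)‖ < ρ)).card : ℝ) := by
  obtain ⟨ξ, rfl⟩ : ∃ ξ : ℝ, (ξ : UnitAddCircle) = x := Quotient.exists_rep x
  set u : ℝ := M*(ξ - ρ) with hu
  set v : ℝ := M*(ξ + ρ) with hv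
  have hMR : (0:ℝ) < M := by exact_mod_cast hM
  have hMZ : (M:ℤ) ≠ 0 := by exact_mod_cast hM.ne'
  set Φ : ℤ → Fin M := fun k => ⟨(k % M).toNat, by
    have h1 : (0:ℤ) ≤ k % M := Int.emod_nonneg k hMZ
    have h2 : k % M < M := Int.emod_lt_of_pos k (by exact_mod_cast hM)
    omega⟩ with hΦ
  have hΦval : ∀ k : ℤ, ((Φ k : ℕ) : ℤ) = k % M := by
    intro k
    simp only [hΦ]
    exact Int.toNat_of_nonneg (Int.emod_nonneg k hMZ)
  have hrange : ∀ k ∈ Finset.Ioo ⌊u⌋ ⌈v⌉, u < (k:ℝ) ∧ (k:ℝ) < v := by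
    intro k hk
    rw [Finset.mem_Ioo] at hk
    constructor
    · calc u < ⌊u⌋ + 1 := Int.lt_floor_add_one u
        _ ≤ (k:ℝ) := by exact_mod_cast hk.1
    · calc (k:ℝ) ≤ (⌈v⌉:ℝ) - 1 := by
            have : (k:ℤ) ≤ ⌈v⌉ - 1 := by omega
            exact_mod_cast this
        _ < v := by have := Int.ceil_lt_add_one v; linarith
  have key : ∀ k ∈ Finset.Ioo ⌊u⌋ ⌈v⌉, Φ k ∈ (Finset.univ.filter
      (fun i : Fin M => ‖(ξ : UnitAddCircle) - ((((i : ℕ) : ℝ)/M : ℝ) : UnitAddCircle)‖ < ρ)) := by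
    intro k hk
    obtain ⟨hku, hkv⟩ := hrange k hk
    rw [Finset.mem_filter]
    refine ⟨Finset.mem_univ _, ?_⟩
    have hmod : ((((Φ k : ℕ) : ℝ)/M : ℝ) : UnitAddCircle) = (((k : ℝ)/M : ℝ) : UnitAddCircle) := by
      apply coe_eq_coe_of_int _ _ (-(k / M))
      have hcast : ((Φ k : ℕ) : ℝ) = ((k % (M:ℤ) : ℤ) : ℝ) :=
        mod_cast congrArg (fun z : ℤ => (z : ℝ)) (hΦval k)
      rw [hcast]
      have h2 : ((k % (M:ℤ) : ℤ) : ℝ) = (k:ℝ) - (M:ℝ) * ((k / (M:ℤ) : ℤ) : ℝ) := by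
        have h4 : ((k % (M:ℤ) : ℤ) : ℝ) = ((k - M * (k / M) : ℤ) : ℝ) :=
          congrArg (fun z : ℤ => (z : ℝ)) (Int.emod_def k (M:ℤ))
        push_cast at h4
        linarith
      rw [h2]
      field_simp
      push_cast; ring
    rw [hmod]
    have hsub : (ξ : UnitAddCircle) - (((k : ℝ)/M : ℝ) : UnitAddCircle)
        = ((ξ - k/M : ℝ) : UnitAddCircle) := by rw [AddCircle.coe_sub]
    rw [hsub]
    refine lt_of_le_of_lt (norm_coe_le _) ?_
    have h1 : ξ - ρ < k/M := by rw [lt_div_iff₀ hMR]; rw [hu] at hku; linarith [hku]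
    have h2 : (k:ℝ)/M < ξ + ρ := by rw [div_lt_iff₀ hMR]; rw [hv] at hkv; linarith [hkv]
    rw [abs_sub_lt_iff]
    constructor <;> linarith
  have hinj : Set.InjOn Φ (Finset.Ioo ⌊u⌋ ⌈v⌉ : Finset ℤ) := by
    intro k hk k' hk' he
    have h1 := hrange k hk
    have h2 := hrange k' hk'
    have hmod : k % M = k' % M := by rw [← hΦval k, ← hΦval k', he]
    have hdvd : (M:ℤ) ∣ (k - k') := Int.ModEq.dvd (hmod.symm)
    have habs : |(k:ℝ) - k'| < M := by
      rw [abs_sub_lt_iff]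
      constructor <;> nlinarith [h1.1, h1.2, h2.1, h2.2]
    have habs' : |k - k'| < (M:ℤ) := by
      have : ((|k - k'| : ℤ) : ℝ) < M := by push_cast; exact habs
      exact_mod_cast this
    have := Int.eq_zero_of_abs_lt_dvd hdvd habs'
    omega
  calc 2*ρ*M - 1 = v - u - 1 := by rw [hu, hv]; ring
    _ ≤ (⌈v⌉:ℝ) - ⌊u⌋ - 1 := by
        have := Int.le_ceil v
        have := Int.floor_le u
        linarith
    _ ≤ ((Finset.Ioo ⌊u⌋ ⌈v⌉).card : ℝ) := by
        rw [Int.card_Ioo]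
        have h5 : ((⌈v⌉ - ⌊u⌋ - 1 : ℤ) : ℝ) ≤ (((⌈v⌉ - ⌊u⌋ - 1).toNat : ℤ) : ℝ) := by
          exact_mod_cast Int.self_le_toNat (⌈v⌉ - ⌊u⌋ - 1)
        push_cast at h5 ⊢
        linarith
    _ ≤ _ := by exact_mod_cast Finset.card_le_card_of_injOn Φ key hinj

open scoped Classical in
lemma box_count {d : ℕ} (M : ℕ) (hM : 0 < M) (ρ : ℝ) (hρ : ρ ≤ 1/4)
    (h1 : 1 ≤ 2*ρ*M) (x : Fin d → UnitAddCircle) :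
    (2*ρ*M - 1)^d ≤ ((Finset.univ.filter
      (fun k : Fin d → Fin M =>
        ∀ j, ‖x j - ((((k j : ℕ) : ℝ)/M : ℝ) : UnitAddCircle)‖ < ρ)).card : ℝ) := by
  have hfe : (Finset.univ.filter
      (fun k : Fin d → Fin M => ∀ j, ‖x j - ((((k j : ℕ) : ℝ)/M : ℝ) : UnitAddCircle)‖ < ρ))
      = Fintype.piFinset (fun j => Finset.univ.filter
        (fun i : Fin M => ‖x j - ((((i : ℕ) : ℝ)/M : ℝ) : UnitAddCircle)‖ < ρ)) := by
    ext k
    simp [Fintype.mem_piFinset]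
  rw [hfe, Fintype.card_piFinset]
  push_cast
  calc (2*ρ*M - 1)^d = ∏ _j : Fin d, (2*ρ*M-1) := by
        rw [Finset.prod_const, Finset.card_univ, Fintype.card_fin]
    _ ≤ _ := by
        apply Finset.prod_le_prod
        · intro j _; linarith
        · intro j _; exact arc_count M hM ρ hρ (x j)

open scoped Classical in
lemma key_count {d : ℕ} (M : ℕ) (hM : 0 < M) (ρ : ℝ) (hρ : ρ < 1/4)
    (h1 : 1 ≤ 2*ρ*M) (A' : Finset (Fin d → UnitAddCircle))
    (hA' : ∀ a ∈ A', ∀ j, a j = 0 ∨ a j = half) (y : Fin d → UnitAddCircle) :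
    (A'.card : ℝ) * (2*ρ*M - 1)^d ≤ ((Finset.univ.filter
      (fun k : Fin d → Fin M => ∃ a ∈ A', ∀ j,
        ‖y j - a j - ((((k j : ℕ) : ℝ)/M : ℝ) : UnitAddCircle)‖ < ρ)).card : ℝ) := by
  classical
  set P : (Fin d → UnitAddCircle) → Finset (Fin d → Fin M) := fun a =>
    Finset.univ.filter (fun k : Fin d → Fin M => ∀ j,
      ‖(y j - a j) - ((((k j : ℕ) : ℝ)/M : ℝ) : UnitAddCircle)‖ < ρ) with hP
  have hunion : (Finset.univ.filter
      (fun k : Fin d → Fin M => ∃ a ∈ A', ∀ j,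
        ‖y j - a j - ((((k j : ℕ) : ℝ)/M : ℝ) : UnitAddCircle)‖ < ρ)) = A'.biUnion P := by
    ext k
    simp [hP, Finset.mem_biUnion]
  have hdisj : ∀ a ∈ A', ∀ a' ∈ A', a ≠ a' → Disjoint (P a) (P a') := by
    intro a ha a' ha' hne
    rw [Finset.disjoint_left]
    intro k hk hk'
    apply hne
    funext j
    rw [hP, Finset.mem_filter] at hk hk'
    have e1 := hk.2 j
    have e2 := hk'.2 j
    by_contra hja
    have hd : a j - a' j = half := by
      rcases hA' a ha j with h | h <;> rcases hA' a' ha' j with h' | h' <;>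
        rw [h, h'] at hja ⊢ <;> first
          | (exact absurd rfl hja)
          | simp [sub_eq_add_neg, neg_half, half_add_half]
    have hrw : a j - a' j = (y j - a' j - ((((k j : ℕ) : ℝ)/M : ℝ) : UnitAddCircle))
        - (y j - a j - ((((k j : ℕ) : ℝ)/M : ℝ) : UnitAddCircle)) := by abel
    have hn : ‖a j - a' j‖ < 2*ρ := by
      rw [hrw]
      calc ‖_ - _‖ ≤ _ + _ := norm_sub_le _ _
        _ < 2*ρ := by linarith
    rw [hd, norm_half] at hn
    linarith
  rw [hunion]
  rw [Finset.card_biUnion hdisj]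
  push_cast
  calc (A'.card : ℝ) * (2*ρ*M - 1)^d = A'.card • ((2*ρ*M - 1)^d) := by
        rw [nsmul_eq_mul]
    _ ≤ ∑ a ∈ A', ((P a).card : ℝ) := by
        apply Finset.card_nsmul_le_sum
        intro a _
        simpa using box_count M hM ρ hρ.le h1 (fun j => y j - a j)

end LiftNonrec

open LiftNonrec Filter Finset

set_option maxHeartbeats 1600000 in
/-- If `R ⊆ G_d` is a `δ`-nonrecurrent subset of the finite group `G_d` (i.e. there
is `A ⊆ G_d` with `|A| > δ|G_d|` and `(A - A) ∩ R = ∅`), then for every `α ∈ 𝕋^d`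
and all sufficiently small `ε > 0`, the set `S = {n ∈ ℤ : nα ∈ R + V_ε}` is
`δ`-nonrecurrent. -/
theorem lift_nonrecurrence_from_Gd {d : ℕ} (δ : ℝ) (hδ : 0 ≤ δ)
    (R : Set (Fin d → UnitAddCircle)) (hR : R ⊆ Gd d)
    (hnon : ∃ A : Set (Fin d → UnitAddCircle), A ⊆ Gd d ∧
      δ * ((Gd d).ncard : ℝ) < (A.ncard : ℝ) ∧ ∀ a ∈ A, ∀ b ∈ A, a - b ∉ R)
    (α : Fin d → UnitAddCircle) :
    ∃ ε₀ > (0 : ℝ), ∀ ε : ℝ, 0 < ε → ε ≤ ε₀ →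
      IntNonrecurrent δ {n : ℤ | n • α ∈ R + Veps d ε} := by
  classical
  obtain ⟨A, hAG, hAcard, hAdiff⟩ := hnon
  have hAfin : A.Finite := (Gd_finite d).subset hAG
  set A' : Finset (Fin d → UnitAddCircle) := hAfin.toFinset with hA'def
  have hA'A : ∀ a, a ∈ A' ↔ a ∈ A := fun a => hAfin.mem_toFinset
  have hA'G : ∀ a ∈ A', ∀ j, a j = 0 ∨ a j = half := by
    intro a ha j
    exact (mem_Gd_iff a).mp (hAG ((hA'A a).mp ha)) j
  have hAc : (A.ncard : ℝ) = (A'.card : ℝ) := by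
    rw [Set.ncard_eq_toFinset_card A hAfin]
  have hc : δ * 2^d < (A'.card : ℝ) := by
    rw [← hAc]
    have := hAcard
    rwa [ncard_Gd d, Nat.cast_pow, Nat.cast_ofNat] at this
  -- choose the auxiliary margin x₀
  obtain ⟨x₀, hx0pos, hx0le, hx0δ⟩ :
      ∃ x₀ : ℝ, 0 < x₀ ∧ x₀ ≤ 1/8 ∧ δ < (A'.card : ℝ) * (1/2 - x₀)^d := by
    have hcont : ContinuousAt (fun x : ℝ => (A'.card : ℝ) * (1/2 - x)^d) 0 := by fun_prop
    have h0 : δ < (A'.card : ℝ) * (1/2 - 0)^d := by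
      have h2 : (0:ℝ) < 2^d := by positivity
      rw [sub_zero, div_pow, one_pow, mul_one_div, lt_div_iff₀ h2]
      exact hc
    have hev := hcont.eventually (eventually_gt_nhds h0)
    rw [Metric.eventually_nhds_iff] at hev
    obtain ⟨r, hr, hball⟩ := hev
    refine ⟨min (r/2) (1/8), by positivity, min_le_right _ _, hball ?_⟩
    rw [Real.dist_eq, sub_zero, abs_of_pos (by positivity)]
    calc min (r/2) (1/8) ≤ r/2 := min_le_left _ _
      _ < r := by linarith
  set ρ : ℝ := 1/4 - x₀/4 with hρdef
  have hρ0 : 0 < ρ := by rw [hρdef]; linarith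
  have hρlt : ρ < 1/4 := by rw [hρdef]; linarith
  set M : ℕ := ⌈(2:ℝ)/x₀⌉₊ with hMdef
  have hM2 : 2/x₀ ≤ (M:ℝ) := Nat.le_ceil _
  have hMx : (2:ℝ) ≤ M * x₀ := by
    have := (div_le_iff₀ hx0pos).mp hM2
    linarith
  have hMpos : 0 < M := by
    by_contra h
    push_neg at h
    interval_cases M
    simp at hMx
    nlinarith
  have hMR : (0:ℝ) < M := by exact_mod_cast hMpos
  have h1 : (1:ℝ) ≤ 2*ρ*M := by
    have hM16 : (16:ℝ) ≤ M := by nlinarith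
    rw [hρdef]
    nlinarith
  have hLM : ((1:ℝ)/2 - x₀) * M ≤ 2*ρ*M - 1 := by
    rw [hρdef]
    nlinarith
  have hbase : (0:ℝ) ≤ (1/2 - x₀) * M := by nlinarith
  -- the density threshold
  set m₁ : ℝ := (A'.card : ℝ) * (2*ρ*M - 1)^d / (M:ℝ)^d with hm₁def
  have hm₁δ : δ < m₁ := by
    have hpow : ((1/2 - x₀) * M)^d ≤ (2*ρ*M - 1)^d := pow_le_pow_left₀ hbase hLM d
    have hMd : (0:ℝ) < (M:ℝ)^d := by positivity
    rw [hm₁def, lt_div_iff₀ hMd]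
    calc δ * (M:ℝ)^d < ((A'.card : ℝ) * (1/2 - x₀)^d) * (M:ℝ)^d := by
          apply mul_lt_mul_of_pos_right hx0δ hMd
      _ = (A'.card : ℝ) * ((1/2 - x₀) * M)^d := by rw [mul_pow]; ring
      _ ≤ (A'.card : ℝ) * (2*ρ*M - 1)^d := by
          apply mul_le_mul_of_nonneg_left hpow (by positivity)
  refine ⟨x₀/4, by positivity, ?_⟩
  intro ε hε hεle
  -- the candidate sets
  set B : (Fin d → UnitAddCircle) → Set ℤ := fun t =>
    {n : ℤ | ∃ a ∈ A', ∀ j, ‖n • α j - a j - t j‖ < ρ} with hBdef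
  -- Part 1 : differences of elements of `B t` avoid `S`
  have hdiffavoid : ∀ t : Fin d → UnitAddCircle, ∀ b ∈ B t, ∀ b' ∈ B t,
      (b - b') ∉ {n : ℤ | n • α ∈ R + Veps d ε} := by
    intro t b hb b' hb' hmem
    obtain ⟨a, ha, hu⟩ := hb
    obtain ⟨a', ha', hu'⟩ := hb'
    rw [Set.mem_setOf_eq, Set.mem_add] at hmem
    obtain ⟨r, hr, v, hv, hsum⟩ := hmem
    have hrne : ∃ j, r j ≠ a j - a' j := by
      by_contra h
      push_neg at h
      have : r = a - a' := funext fun j => by rw [h j]; rfl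
      exact hAdiff a ((hA'A a).mp ha) a' ((hA'A a').mp ha') (this ▸ hr)
    obtain ⟨j, hj⟩ := hrne
    have hrj : r j = 0 ∨ r j = half := (mem_Gd_iff r).mp (hR hr) j
    have haj : a j - a' j = 0 ∨ a j - a' j = half :=
      sub_mem_half _ _ (hA'G a ha j) (hA'G a' ha' j)
    have hgj : r j - (a j - a' j) = half := by
      rcases hrj with h | h <;> rcases haj with h' | h' <;> rw [h, h'] at hj ⊢
      · exact absurd rfl hj
      · simp [zero_sub, neg_half]
      · simp
      · exact absurd rfl hj
    have e1 := hu j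
    have e2 := hu' j
    have hsj : r j + v j = (b - b') • α j := congrFun hsum j
    have hbb : (b - b') • α j = b • α j - b' • α j := by
      rw [sub_zsmul, sub_eq_add_neg]
    have hid : (b • α j - a j - t j) - (b' • α j - a' j - t j) = half + v j := by
      have h3 : (b • α j - a j - t j) - (b' • α j - a' j - t j)
          = (b • α j - b' • α j) - (a j - a' j) := by abel
      rw [h3, ← hbb, ← hsj, ← hgj]
      abel
    have hn1 : ‖(b • α j - a j - t j) - (b' • α j - a' j - t j)‖ < 2 * ρ := by
      calc ‖_ - _‖ ≤ _ + _ := norm_sub_le _ _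
        _ < 2*ρ := by linarith
    rw [hid] at hn1
    have hvj : ‖v j‖ < ε := hv j
    have hlow : 1/2 - ε < ‖half + v j‖ := by
      have h4 : ‖(half + v j) - v j‖ ≤ ‖half + v j‖ + ‖v j‖ := norm_sub_le _ _
      rw [add_sub_cancel_right, norm_half] at h4
      linarith
    rw [hρdef] at hn1
    linarith
  -- Part 2 : for some grid translate `t k`, `B (t k)` has upper density `> δ`
  set t : (Fin d → Fin M) → (Fin d → UnitAddCircle) :=
    fun k j => ((((k j : ℕ) : ℝ)/M : ℝ) : UnitAddCircle) with htdef
  have hcount : ∀ n : ℤ, (A'.card : ℝ) * (2*ρ*M - 1)^d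
      ≤ ((Finset.univ.filter (fun k : Fin d → Fin M => n ∈ B (t k))).card : ℝ) := by
    intro n
    have hkc := key_count M hMpos ρ hρlt h1 A' hA'G (fun j => n • α j)
    have hfe : (Finset.univ.filter
        (fun k : Fin d → Fin M => ∃ a ∈ A', ∀ j,
          ‖(fun j => n • α j) j - a j - ((((k j : ℕ) : ℝ)/M : ℝ) : UnitAddCircle)‖ < ρ))
        = (Finset.univ.filter (fun k : Fin d → Fin M => n ∈ B (t k))) := by
      apply Finset.filter_congr
      intro k _
      simp only [hBdef, htdef, Set.mem_setOf_eq]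
    rwa [hfe] at hkc
  have hsum : ∀ N : ℕ, (N : ℝ) * ((A'.card : ℝ) * (2*ρ*M - 1)^d)
      ≤ ∑ k : Fin d → Fin M,
        (((Finset.Icc (1:ℤ) (N:ℤ)).filter (· ∈ B (t k))).card : ℝ) := by
    intro N
    have hswap : ∑ k : Fin d → Fin M,
        (((Finset.Icc (1:ℤ) (N:ℤ)).filter (· ∈ B (t k))).card : ℝ)
        = ∑ n ∈ Finset.Icc (1:ℤ) (N:ℤ),
          ((Finset.univ.filter (fun k : Fin d → Fin M => n ∈ B (t k))).card : ℝ) := by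
      simp_rw [Finset.card_filter]
      push_cast
      rw [Finset.sum_comm]
    rw [hswap]
    have hIccN : ((Finset.Icc (1:ℤ) (N:ℤ)).card : ℝ) = N := by
      rw [Int.card_Icc]
      simp
    calc (N:ℝ) * ((A'.card : ℝ) * (2*ρ*M - 1)^d)
        = ∑ _n ∈ Finset.Icc (1:ℤ) (N:ℤ), ((A'.card : ℝ) * (2*ρ*M - 1)^d) := by
          rw [Finset.sum_const, nsmul_eq_mul, hIccN]
      _ ≤ _ := Finset.sum_le_sum fun n _ => hcount n
  have hex : ∀ N : ℕ, ∃ k : Fin d → Fin M,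
      (N:ℝ) * m₁ ≤ (((Finset.Icc (1:ℤ) (N:ℤ)).filter (· ∈ B (t k))).card : ℝ) := by
    intro N
    by_contra h
    push_neg at h
    have hne : (Finset.univ : Finset (Fin d → Fin M)).Nonempty := by
      refine ⟨fun _ => ⟨0, hMpos⟩, Finset.mem_univ _⟩
    have hlt := Finset.sum_lt_sum_of_nonempty hne
      (f := fun k => (((Finset.Icc (1:ℤ) (N:ℤ)).filter (· ∈ B (t k))).card : ℝ))
      (g := fun _ => (N:ℝ) * m₁) (fun k _ => h k)
    have hcards : ((Finset.univ : Finset (Fin d → Fin M)).card : ℝ) = (M:ℝ)^d := by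
      simp [Finset.card_univ]
    rw [Finset.sum_const, nsmul_eq_mul] at hlt
    have hMd : (0:ℝ) < (M:ℝ)^d := by positivity
    have : (N:ℝ) * ((A'.card : ℝ) * (2*ρ*M - 1)^d) < (M:ℝ)^d * ((N:ℝ) * m₁) := by
      calc (N:ℝ) * ((A'.card : ℝ) * (2*ρ*M - 1)^d) ≤ _ := hsum N
        _ < ↑(Finset.univ : Finset (Fin d → Fin M)).card * ((N:ℝ) * m₁) := hlt
        _ = (M:ℝ)^d * ((N:ℝ) * m₁) := by rw [hcards]
    have heq : (M:ℝ)^d * ((N:ℝ) * ((A'.card : ℝ) * (2*ρ*M - 1)^d / (M:ℝ)^d))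
        = (N:ℝ) * ((A'.card : ℝ) * (2*ρ*M - 1)^d) := by
      field_simp
    rw [hm₁def, heq] at this
    exact lt_irrefl _ this
  choose K hK using hex
  obtain ⟨k₀, hk₀⟩ := Finite.exists_infinite_fiber K
  have hk₀' : (K ⁻¹' {k₀}).Infinite := Set.infinite_coe_iff.mp hk₀
  refine ⟨B (t k₀), ?_, hdiffavoid (t k₀)⟩
  have hfreq : ∃ᶠ N : ℕ in atTop,
      m₁ ≤ ((B (t k₀) ∩ Set.Icc (1:ℤ) (N:ℤ)).ncard : ℝ) / N := by
    rw [Filter.frequently_atTop]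
    intro a
    obtain ⟨N, hNmem, hNgt⟩ := hk₀'.exists_gt (max a 1)
    refine ⟨N, le_trans (le_max_left a 1) hNgt.le, ?_⟩
    have hN1 : 1 ≤ N := lt_of_le_of_lt (le_max_right a 1) hNgt |>.le
    have hNpos : (0:ℝ) < N := by exact_mod_cast Nat.lt_of_lt_of_le Nat.zero_lt_one hN1
    have hKN : K N = k₀ := hNmem
    have hgood := hK N
    rw [hKN] at hgood
    have hset : B (t k₀) ∩ Set.Icc (1:ℤ) (N:ℤ)
        = ↑((Finset.Icc (1:ℤ) (N:ℤ)).filter (· ∈ B (t k₀))) := by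
      ext n
      simp [Set.mem_Icc, and_comm]
    rw [hset, Set.ncard_coe_finset]
    rw [le_div_iff₀ hNpos]
    linarith [hgood]
  have hbdd : IsBoundedUnder (· ≤ ·) atTop
      (fun N : ℕ => ((B (t k₀) ∩ Set.Icc (1:ℤ) (N:ℤ)).ncard : ℝ) / N) := by
    refine isBoundedUnder_of ⟨1, fun N => ?_⟩
    rcases Nat.eq_zero_or_pos N with h | h
    · subst h
      simp
    · have hNpos : (0:ℝ) < N := by exact_mod_cast h
      have hle : (B (t k₀) ∩ Set.Icc (1:ℤ) (N:ℤ)).ncard ≤ (Set.Icc (1:ℤ) (N:ℤ)).ncard :=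
        Set.ncard_le_ncard Set.inter_subset_right (Set.finite_Icc _ _)
      have hIcc : (Set.Icc (1:ℤ) (N:ℤ)).ncard = N := by
        rw [← Finset.coe_Icc, Set.ncard_coe_finset, Int.card_Icc]
        simp
      rw [div_le_one hNpos]
      rw [hIcc] at hle
      exact_mod_cast hle
  have hld := Filter.le_limsup_of_frequently_le hfreq hbdd
  rw [upperDensity]
  exact lt_of_lt_of_le hm₁δ hld
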